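/- Let H be a real Hilbert space, f: H → ℝ ∪ {+∞} proper, lsc, and convex, and suppose f is affine on a segment [x₀, x₁] with x₀ ≠ x₁. Then for every x in the open segment (x₀, x₁), ∂f(x) = ∂f(x₀) ∩ ∂f(x₁). -/
import Mathlib


open scoped InnerProductSpace

variable {H : Type*} [NormedAddCommGroup H] [InnerProductSpace ℝ H] [CompleteSpace H]

/-- `f` is proper: not identically `⊤` and never `⊥`. -/
def IsProperFn (f : H → EReal) : Prop := (∃ x, f x ≠ ⊤) ∧ ∀ x, f x ≠ ⊥

/-- `f` is convex (as an extended-real-valued function). -/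
def IsConvexFn (f : H → EReal) : Prop :=
  ∀ x y : H, ∀ t : ℝ, 0 < t → t < 1 →
    f ((1 - t) • x + t • y) ≤ ((1 - t : ℝ) : EReal) * f x + ((t : ℝ) : EReal) * f y

/-- `f` is strictly convex on the set `s`. -/
def StrictConvexOnSet (f : H → EReal) (s : Set H) : Prop :=
  ∀ x ∈ s, ∀ y ∈ s, x ≠ y → ∀ t : ℝ, 0 < t → t < 1 →
    f ((1 - t) • x + t • y) < ((1 - t : ℝ) : EReal) * f x + ((t : ℝ) : EReal) * f y

/-- The effective domain of `f`. -/
def domFn (f : H → EReal) : Set H := {x | f x ≠ ⊤}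

/-- `f` is strictly convex (on its domain). -/
def IsStrictConvexFn (f : H → EReal) : Prop := StrictConvexOnSet f (domFn f)

/-- The convex subdifferential of `f` at `x`. -/
def subdiff (f : H → EReal) (x : H) : Set H :=
  {v | ∀ y : H, f x + ((⟪v, y - x⟫_ℝ : ℝ) : EReal) ≤ f y}

/-- The domain of the subdifferential. -/
def domSubdiff (f : H → EReal) : Set H := {x | (subdiff f x).Nonempty}

/-- `f` is almost strictly convex: strictly convex along every line segment in `dom ∂f`. -/
def AlmostStrictlyConvex (f : H → EReal) : Prop :=
  ∀ x₀ x₁ : H, x₀ ≠ x₁ → segment ℝ x₀ x₁ ⊆ domSubdiff f →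
    StrictConvexOnSet f (segment ℝ x₀ x₁)

/-- `∂f` is strictly monotone. -/
def StrictlyMonotoneSubdiff (f : H → EReal) : Prop :=
  ∀ x₀ x₁ v₀ v₁ : H, v₀ ∈ subdiff f x₀ → v₁ ∈ subdiff f x₁ → x₀ ≠ x₁ →
    0 < ⟪v₀ - v₁, x₀ - x₁⟫_ℝ

omit [CompleteSpace H] in
lemma ne_top_of_subdiff (f : H → EReal) (y₀ : H) (hy₀ : f y₀ ≠ ⊤) {z v : H}
    (hv : v ∈ subdiff f z) : f z ≠ ⊤ := by
  intro h
  have := hv y₀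
  rw [h, EReal.top_add_coe] at this
  exact hy₀ (top_le_iff.mp this)

theorem stmt7 (f : H → EReal) (hp : IsProperFn f) (hlsc : LowerSemicontinuous f)
    (hc : IsConvexFn f) (x₀ x₁ : H) (hne : x₀ ≠ x₁)
    (haff : ∀ t : ℝ, 0 ≤ t → t ≤ 1 →
      f ((1 - t) • x₀ + t • x₁) = ((1 - t : ℝ) : EReal) * f x₀ + ((t : ℝ) : EReal) * f x₁) :
    ∀ x ∈ openSegment ℝ x₀ x₁, subdiff f x = subdiff f x₀ ∩ subdiff f x₁ := by
  obtain ⟨⟨y₀, hy₀⟩, hbot⟩ := hp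
  rintro x ⟨s, t, hs, ht, hst, rfl⟩
  have hs1 : s = 1 - t := by linarith
  subst hs1
  have ht1 : t < 1 := by linarith
  have haffx : f ((1 - t) • x₀ + t • x₁)
      = ((1 - t : ℝ) : EReal) * f x₀ + ((t : ℝ) : EReal) * f x₁ :=
    haff t ht.le ht1.le
  set x := (1 - t) • x₀ + t • x₁ with hxdef
  ext v
  have hinner0 : ∀ y : H, ⟪v, y - x₀⟫_ℝ = ⟪v, y⟫_ℝ - ⟪v, x₀⟫_ℝ := by
    intro y; rw [inner_sub_right]
  have hinner1 : ∀ y : H, ⟪v, y - x₁⟫_ℝ = ⟪v, y⟫_ℝ - ⟪v, x₁⟫_ℝ := by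
    intro y; rw [inner_sub_right]
  have hinnerx : ∀ y : H, ⟪v, y - x⟫_ℝ
      = ⟪v, y⟫_ℝ - ((1 - t) * ⟪v, x₀⟫_ℝ + t * ⟪v, x₁⟫_ℝ) := by
    intro y
    rw [hxdef, inner_sub_right, inner_add_right, real_inner_smul_right, real_inner_smul_right]
  simp only [Set.mem_inter_iff]
  constructor
  · intro hv
    have hxt : f x ≠ ⊤ := ne_top_of_subdiff f y₀ hy₀ hv
    have hmul : ∀ s : ℝ, 0 < s → ∀ z : EReal, z ≠ ⊥ → ((s : ℝ) : EReal) * z ≠ ⊥ := by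
      intro s hspos z hz
      induction z using EReal.rec with
      | bot => exact absurd rfl hz
      | coe r => rw [← EReal.coe_mul]; exact EReal.coe_ne_bot _
      | top => rw [EReal.coe_mul_top_of_pos hspos]; exact bot_lt_top.ne'
    have h1b : ((t : ℝ) : EReal) * f x₁ ≠ ⊥ := hmul t ht _ (hbot x₁)
    have h0b : ((1 - t : ℝ) : EReal) * f x₀ ≠ ⊥ := hmul (1 - t) (by linarith) _ (hbot x₀)
    have h0t : f x₀ ≠ ⊤ := by
      intro h; apply hxt
      rw [haffx, h, EReal.coe_mul_top_of_pos (by linarith), EReal.top_add_of_ne_bot h1b]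
    have h1t : f x₁ ≠ ⊤ := by
      intro h; apply hxt
      rw [haffx, h, EReal.coe_mul_top_of_pos (by linarith), EReal.add_top_of_ne_bot h0b]
    set a := (f x₀).toReal with ha
    set b := (f x₁).toReal with hb
    have h0 : f x₀ = (a : EReal) := (EReal.coe_toReal h0t (hbot x₀)).symm
    have h1 : f x₁ = (b : EReal) := (EReal.coe_toReal h1t (hbot x₁)).symm
    have hfx : f x = (((1 - t) * a + t * b : ℝ) : EReal) := by
      rw [haffx, h0, h1]; norm_cast
    have i0 : (1 - t) * a + t * b + ⟪v, x₀ - x⟫_ℝ ≤ a := by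
      have := hv x₀; rw [hfx, h0] at this; exact_mod_cast this
    have i1 : (1 - t) * a + t * b + ⟪v, x₁ - x⟫_ℝ ≤ b := by
      have := hv x₁; rw [hfx, h1] at this; exact_mod_cast this
    rw [hinnerx x₀] at i0
    rw [hinnerx x₁] at i1
    have hceq : ⟪v, x₁⟫_ℝ - ⟪v, x₀⟫_ℝ = b - a := by nlinarith [i0, i1, ht, ht1]
    constructor
    · intro y
      have hvy := hv y
      rw [hfx] at hvy
      have : ((a : ℝ) + ⟪v, y - x₀⟫_ℝ : ℝ) = ((1 - t) * a + t * b) + ⟪v, y - x⟫_ℝ := by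
        rw [hinner0 y, hinnerx y]; nlinarith [hceq]
      calc f x₀ + (⟪v, y - x₀⟫_ℝ : EReal) = ((a + ⟪v, y - x₀⟫_ℝ : ℝ) : EReal) := by
            rw [h0]; norm_cast
        _ = (((1 - t) * a + t * b + ⟪v, y - x⟫_ℝ : ℝ) : EReal) := by rw [this]
        _ ≤ f y := by exact_mod_cast hvy
    · intro y
      have hvy := hv y
      rw [hfx] at hvy
      have : ((b : ℝ) + ⟪v, y - x₁⟫_ℝ : ℝ) = ((1 - t) * a + t * b) + ⟪v, y - x⟫_ℝ := by
        rw [hinner1 y, hinnerx y]; nlinarith [hceq]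
      calc f x₁ + (⟪v, y - x₁⟫_ℝ : EReal) = ((b + ⟪v, y - x₁⟫_ℝ : ℝ) : EReal) := by
            rw [h1]; norm_cast
        _ = (((1 - t) * a + t * b + ⟪v, y - x⟫_ℝ : ℝ) : EReal) := by rw [this]
        _ ≤ f y := by exact_mod_cast hvy
  · rintro ⟨hv0, hv1⟩
    have h0t : f x₀ ≠ ⊤ := ne_top_of_subdiff f y₀ hy₀ hv0
    have h1t : f x₁ ≠ ⊤ := ne_top_of_subdiff f y₀ hy₀ hv1
    set a := (f x₀).toReal with ha
    set b := (f x₁).toReal with hb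
    have h0 : f x₀ = (a : EReal) := (EReal.coe_toReal h0t (hbot x₀)).symm
    have h1 : f x₁ = (b : EReal) := (EReal.coe_toReal h1t (hbot x₁)).symm
    have hfx : f x = (((1 - t) * a + t * b : ℝ) : EReal) := by
      rw [haffx, h0, h1]; norm_cast
    intro y
    rcases eq_or_ne (f y) ⊤ with hy | hy
    · rw [hy]; exact le_top
    · set r := (f y).toReal with hr
      have hyr : f y = (r : EReal) := (EReal.coe_toReal hy (hbot y)).symm
      have i0 : a + ⟪v, y - x₀⟫_ℝ ≤ r := by
        have := hv0 y; rw [h0, hyr] at this; exact_mod_cast this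
      have i1 : b + ⟪v, y - x₁⟫_ℝ ≤ r := by
        have := hv1 y; rw [h1, hyr] at this; exact_mod_cast this
      rw [hfx, hyr]
      rw [hinner0 y] at i0; rw [hinner1 y] at i1
      have : ((1 - t) * a + t * b : ℝ) + ⟪v, y - x⟫_ℝ ≤ r := by
        rw [hinnerx y]
        nlinarith [mul_le_mul_of_nonneg_left i0 (by linarith : (0:ℝ) ≤ 1 - t),
          mul_le_mul_of_nonneg_left i1 ht.le]
      exact_mod_cast this
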